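/- If a matching μ has a partial preimage H(μ) that is closed under weakly better replies, then under the man-proposing deferred acceptance mechanism μ has no blocking pair with respect to the true preferences. -/

import Mathlib

open scoped Classical

/-- A marriage problem's (strict) preference profile, given by injective rank
functions over potential partners plus the option `none` of staying single
(lower rank = more preferred). -/
structure Pref (M W : Type) where
  mrank : M → Option W → ℕ
  wrank : W → Option M → ℕ
  minj : ∀ a x y, mrank a x = mrank a y → x = y
  winj : ∀ b x y, wrank b x = wrank b y → x = y

/-- A one-to-one matching between `M` and `W` (with `none` = single). -/
structure Matching (M W : Type) where
  mu : M → Option W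
  nu : W → Option M
  consistent : ∀ a b, mu a = some b ↔ nu b = some a

/-- No player strictly prefers being single to the assigned partner. -/
def IndivRational {M W : Type} (P : Pref M W) (μ : Matching M W) : Prop :=
  (∀ a, ¬ P.mrank a none < P.mrank a (μ.mu a)) ∧
  (∀ b, ¬ P.wrank b none < P.wrank b (μ.nu b))

/-- The pair `(a, b)` blocks `μ`. -/
def Blocks {M W : Type} (P : Pref M W) (μ : Matching M W) (a : M) (b : W) : Prop :=
  P.mrank a (some b) < P.mrank a (μ.mu a) ∧ P.wrank b (some a) < P.wrank b (μ.nu b)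

/-- Stability: individual rationality together with absence of blocking pairs. -/
def StableMatching {M W : Type} (P : Pref M W) (μ : Matching M W) : Prop :=
  IndivRational P μ ∧ ∀ a b, ¬ Blocks P μ a b

noncomputable section

variable {M W : Type} [Fintype M] [Fintype W]

/-- `b` is acceptable to man `a`. -/
def mAcc (P : Pref M W) (a : M) (b : W) : Prop := P.mrank a (some b) < P.mrank a none

/-- `a` is acceptable to woman `b`. -/
def wAcc (P : Pref M W) (b : W) (a : M) : Prop := P.wrank b (some a) < P.wrank b none

/-- The state of the man-proposing deferred acceptance algorithm:
for each man, the index of the next woman on his list to propose to,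
and for each woman, the proposer she currently (tentatively) holds. -/
structure DAState (M W : Type) where
  next : M → ℕ
  hold : W → Option M

/-- A man is free if no woman currently holds him. -/
def IsFree (s : DAState M W) (a : M) : Prop := ∀ b, s.hold b ≠ some a

/-- The `k`-th woman (0-indexed) on man `a`'s list of acceptable women,
in decreasing order of preference. -/
def target (P : Pref M W) (a : M) (k : ℕ) : Option W :=
  if h : ∃ b : W, mAcc P a b ∧
      (Finset.univ.filter fun b' => mAcc P a b' ∧
        P.mrank a (some b') < P.mrank a (some b)).card = k
  then some h.choose else none

/-- Woman `b`'s most preferred acceptable man in the finite set `c` (if any). -/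
def best (P : Pref M W) (b : W) (c : Finset M) : Option M :=
  if h : ∃ a ∈ c, wAcc P b a ∧ ∀ a' ∈ c, wAcc P b a' → P.wrank b (some a) ≤ P.wrank b (some a')
  then some h.choose else none

/-- One round of the man-proposing deferred acceptance algorithm: every free
man proposes to the next woman on his list; every woman holds the best
acceptable man among her current proposers and the man she held before. -/
def daStep (P : Pref M W) (s : DAState M W) : DAState M W where
  next a := if IsFree s a ∧ (target P a (s.next a)).isSome then s.next a + 1 else s.next a
  hold b := best P b
    ((Finset.univ.filter fun a => IsFree s a ∧ target P a (s.next a) = some b) ∪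
      (s.hold b).toFinset)

/-- The algorithm terminates when no free man has anyone left to propose to. -/
def Finished (P : Pref M W) (s : DAState M W) : Prop :=
  ∀ a, IsFree s a → target P a (s.next a) = none

/-- Iterate the deferred acceptance rounds (with fuel). -/
def daRun (P : Pref M W) : ℕ → DAState M W → DAState M W
  | 0, s => s
  | n + 1, s => if Finished P s then s else daRun P n (daStep P s)

/-- The initial state: every man is free and about to propose to his favorite. -/
def daInit : DAState M W := ⟨fun _ => 0, fun _ => none⟩

/-- The final state of the man-proposing deferred acceptance algorithm
(the fuel is enough for the algorithm to have terminated). -/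
def daFinal (P : Pref M W) : DAState M W :=
  daRun P (Fintype.card M * (Fintype.card W + 1) + 1) daInit

/-- The partner of woman `b` under the man-proposing DA matching. -/
def daNu (P : Pref M W) (b : W) : Option M := (daFinal P).hold b

/-- The partner of man `a` under the man-proposing DA matching. -/
def daMu (P : Pref M W) (a : M) : Option W :=
  if h : ∃ b, (daFinal P).hold b = some a then some h.choose else none

/-- Man `a` proposes to woman `b` at some point during the run of the
man-proposing deferred acceptance algorithm. -/
def Proposes (P : Pref M W) (a : M) (b : W) : Prop :=
  ∃ n, IsFree (daRun P n daInit) a ∧ target P a ((daRun P n daInit).next a) = some b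

end

noncomputable section RevelationGame

variable (M W : Type) [Fintype M] [Fintype W] [DecidableEq M] [DecidableEq W]

/-- Pure strategies in the preference revelation game: a player submits a
strict ranking of the opposite side together with the option of being single. -/
abbrev Strat : M ⊕ W → Type := fun i =>
  match i with
  | Sum.inl _ => Option W ≃ Fin (Fintype.card W + 1)
  | Sum.inr _ => Option M ≃ Fin (Fintype.card M + 1)

instance instStratFintype : ∀ i : M ⊕ W, Fintype (Strat M W i)
  | Sum.inl _ => inferInstanceAs (Fintype (Option W ≃ Fin (Fintype.card W + 1)))
  | Sum.inr _ => inferInstanceAs (Fintype (Option M ≃ Fin (Fintype.card M + 1)))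

variable {M W}

/-- The preference profile induced by a report profile. -/
def reportPref (r : ∀ i : M ⊕ W, Strat M W i) : Pref M W where
  mrank a o := ((r (Sum.inl a)) o : ℕ)
  wrank b o := ((r (Sum.inr b)) o : ℕ)
  minj a _ _ h := (r (Sum.inl a)).injective (Fin.val_injective h)
  winj b _ _ h := (r (Sum.inr b)).injective (Fin.val_injective h)

/-- A mixed strategy profile: one probability distribution per player. -/
def IsMixed (x : ∀ i : M ⊕ W, Strat M W i → ℝ) : Prop :=
  ∀ i, (∀ h, 0 ≤ x i h) ∧ ∑ h, x i h = 1

/-- The mixed profile `x` is supported on the product set `H`. -/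
def SupportedOn (x : ∀ i : M ⊕ W, Strat M W i → ℝ)
    (H : ∀ i : M ⊕ W, Set (Strat M W i)) : Prop :=
  ∀ i h, x i h ≠ 0 → h ∈ H i

/-- Expected payoff to player `i` under a mixed strategy profile `x`. -/
def expPay (π : ∀ _ : M ⊕ W, (∀ j : M ⊕ W, Strat M W j) → ℝ) (i : M ⊕ W)
    (x : ∀ j : M ⊕ W, Strat M W j → ℝ) : ℝ :=
  ∑ s : ∀ j : M ⊕ W, Strat M W j, (∏ j, x j (s j)) * π i s

/-- The Dirac (pure) mixed strategy on `h`. -/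
def delta {i : M ⊕ W} (h : Strat M W i) : Strat M W i → ℝ :=
  fun t => if t = h then 1 else 0

/-- `H` is closed under weakly better replies: any pure strategy of a player
that earns at least the average payoff against some mixed profile supported on
`H` already belongs to the player's component of `H`. -/
def CUWBR (π : ∀ _ : M ⊕ W, (∀ j : M ⊕ W, Strat M W j) → ℝ)
    (H : ∀ i : M ⊕ W, Set (Strat M W i)) : Prop :=
  ∀ (i : M ⊕ W) (h : Strat M W i),
    (∃ x, IsMixed x ∧ SupportedOn x H ∧
      expPay π i x ≤ expPay π i (Function.update x i (delta h))) → h ∈ H i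

/-- Payoffs of the preference revelation game induced by the man-proposing
deferred acceptance algorithm: each player's payoff is a strictly decreasing
function of the true-preference rank of the partner assigned by DA run on the
reported profile. -/
def daPayoff (P : Pref M W) (um : M → ℕ → ℝ) (uw : W → ℕ → ℝ) :
    ∀ _ : M ⊕ W, (∀ j : M ⊕ W, Strat M W j) → ℝ := fun i r =>
  match i with
  | Sum.inl a => um a (P.mrank a (daMu (reportPref r) a))
  | Sum.inr b => uw b (P.wrank b (daNu (reportPref r) b))

end RevelationGame

noncomputable section AuxBest
variable {M W : Type} [Fintype M] [Fintype W]

lemma best_eq_some_iff (P : Pref M W) (b : W) (c : Finset M) (m : M) :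
    best P b c = some m ↔ m ∈ c ∧ wAcc P b m ∧
      ∀ a' ∈ c, wAcc P b a' → P.wrank b (some m) ≤ P.wrank b (some a') := by
  constructor
  · intro h
    unfold best at h
    split_ifs at h with hex
    · rw [Option.some_inj] at h
      subst h
      exact hex.choose_spec
  · rintro ⟨hm, hacc, hmin⟩
    have hex : ∃ a ∈ c, wAcc P b a ∧ ∀ a' ∈ c, wAcc P b a' →
        P.wrank b (some a) ≤ P.wrank b (some a') := ⟨m, hm, hacc, hmin⟩
    unfold best
    rw [dif_pos hex]
    obtain ⟨h1, h2, h3⟩ := hex.choose_spec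
    exact P.winj b _ _ (le_antisymm (h3 m hm hacc) (hmin _ h1 h2))

lemma best_eq_none_iff (P : Pref M W) (b : W) (c : Finset M) :
    best P b c = none ↔ ∀ m ∈ c, ¬ wAcc P b m := by
  constructor
  · intro h m hm hacc
    unfold best at h
    split_ifs at h with hex
    apply hex
    obtain ⟨m0, hm0, hmin⟩ := Finset.exists_min_image (c.filter fun x => wAcc P b x)
        (fun x => P.wrank b (some x)) ⟨m, Finset.mem_filter.2 ⟨hm, hacc⟩⟩
    rw [Finset.mem_filter] at hm0
    exact ⟨m0, hm0.1, hm0.2, fun a' ha' hacc' => hmin a' (Finset.mem_filter.2 ⟨ha', hacc'⟩)⟩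
  · intro h
    unfold best
    rw [dif_neg]
    rintro ⟨m, hm, hacc, -⟩
    exact h m hm hacc

lemma best_mem {P : Pref M W} {b : W} {c : Finset M} {m : M} (h : best P b c = some m) :
    m ∈ c := ((best_eq_some_iff P b c m).1 h).1

lemma best_top (P : Pref M W) (b : W) {c : Finset M} {a : M} (hac : a ∈ c)
    (htop : ∀ x, x ≠ some a → P.wrank b (some a) < P.wrank b x) :
    best P b c = some a := by
  rw [best_eq_some_iff]
  refine ⟨hac, htop none (by simp), ?_⟩
  intro a' _ _
  rcases eq_or_ne a' a with rfl | hne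
  · exact le_refl _
  · exact (htop _ (by simp [hne])).le

lemma best_congr {P Q : Pref M W} (b : W) (h : P.wrank b = Q.wrank b) (c : Finset M) :
    best P b c = best Q b c := by
  unfold best wAcc
  rw [h]

lemma target_unique {P : Pref M W} {a : M} {k : ℕ} {c c' : W}
    (h1 : mAcc P a c)
    (h2 : (Finset.univ.filter fun b' => mAcc P a b' ∧
      P.mrank a (some b') < P.mrank a (some c)).card = k)
    (h1' : mAcc P a c')
    (h2' : (Finset.univ.filter fun b' => mAcc P a b' ∧
      P.mrank a (some b') < P.mrank a (some c')).card = k) : c = c' := by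
  have key : ∀ x y : W, mAcc P a x → P.mrank a (some x) < P.mrank a (some y) →
      (Finset.univ.filter fun b' => mAcc P a b' ∧
        P.mrank a (some b') < P.mrank a (some x)).card <
      (Finset.univ.filter fun b' => mAcc P a b' ∧
        P.mrank a (some b') < P.mrank a (some y)).card := by
    intro x y hx hxy
    apply Finset.card_lt_card
    have hsub : (Finset.univ.filter fun b' => mAcc P a b' ∧
        P.mrank a (some b') < P.mrank a (some x)) ⊆
        (Finset.univ.filter fun b' => mAcc P a b' ∧
        P.mrank a (some b') < P.mrank a (some y)) := by
      intro z hz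
      rw [Finset.mem_filter] at hz ⊢
      exact ⟨hz.1, hz.2.1, hz.2.2.trans hxy⟩
    rw [Finset.ssubset_iff_of_subset hsub]
    refine ⟨x, Finset.mem_filter.2 ⟨Finset.mem_univ _, hx, hxy⟩, ?_⟩
    rw [Finset.mem_filter]
    rintro ⟨-, -, hlt⟩
    exact lt_irrefl _ hlt
  rcases lt_trichotomy (P.mrank a (some c)) (P.mrank a (some c')) with h | h | h
  · have := key c c' h1 h
    omega
  · exact Option.some_inj.mp (P.minj a _ _ h)
  · have := key c' c h1' h
    omega

lemma target_eq_some {P : Pref M W} {a : M} {k : ℕ} {c : W} (h : target P a k = some c) :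
    mAcc P a c ∧ (Finset.univ.filter fun b' => mAcc P a b' ∧
      P.mrank a (some b') < P.mrank a (some c)).card = k := by
  unfold target at h
  split_ifs at h with hex
  rw [Option.some_inj] at h
  subst h
  exact hex.choose_spec

lemma target_eq_some_iff {P : Pref M W} {a : M} {k : ℕ} {c : W} :
    target P a k = some c ↔ mAcc P a c ∧ (Finset.univ.filter fun b' => mAcc P a b' ∧
      P.mrank a (some b') < P.mrank a (some c)).card = k := by
  refine ⟨target_eq_some, ?_⟩
  rintro ⟨h1, h2⟩
  have hex : ∃ b : W, mAcc P a b ∧ (Finset.univ.filter fun b' => mAcc P a b' ∧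
      P.mrank a (some b') < P.mrank a (some b)).card = k := ⟨c, h1, h2⟩
  unfold target
  rw [dif_pos hex]
  obtain ⟨hc1, hc2⟩ := hex.choose_spec
  exact congrArg some (target_unique hc1 hc2 h1 h2)

lemma target_eq_none_iff {P : Pref M W} {a : M} {k : ℕ} :
    target P a k = none ↔ ¬ ∃ b : W, mAcc P a b ∧ (Finset.univ.filter fun b' => mAcc P a b' ∧
      P.mrank a (some b') < P.mrank a (some b)).card = k := by
  unfold target
  split_ifs with hex <;> simp [hex]

lemma filter_irrel {α : Type*} (p : α → Prop) (i1 i2 : DecidablePred p) (s : Finset α) :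
    @Finset.filter α p i1 s = @Finset.filter α p i2 s := by
  rw [Subsingleton.elim i1 i2]

lemma target_congr {P Q : Pref M W} (h : P.mrank = Q.mrank) : target P = target Q := by
  funext a k
  rcases ht : target Q a k with _ | c
  · rw [target_eq_none_iff] at ht ⊢
    simp only [mAcc, h] at ht ⊢
    convert ht using 5 <;>
      exact congrArg Finset.card (filter_irrel _ _ _ _)
  · rw [target_eq_some_iff] at ht ⊢
    simp only [mAcc, h] at ht ⊢
    convert ht using 3 <;>
      first
        | exact congrArg Finset.card (filter_irrel _ _ _ _)
        | exact filter_irrel _ _ _ _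

lemma target_lt {P : Pref M W} {a : M} {k : ℕ} {c : W} (h : target P a k = some c) :
    k < Fintype.card W := by
  obtain ⟨hacc, hcard⟩ := target_eq_some h
  have hsub : (Finset.univ.filter fun b' => mAcc P a b' ∧
      P.mrank a (some b') < P.mrank a (some c)) ⊆ Finset.univ.erase c := by
    intro x hx
    rw [Finset.mem_filter] at hx
    refine Finset.mem_erase.2 ⟨?_, Finset.mem_univ _⟩
    rintro rfl
    exact lt_irrefl _ hx.2.2
  have := Finset.card_le_card hsub
  rw [Finset.card_erase_of_mem (Finset.mem_univ c), Finset.card_univ] at this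
  have hpos : 0 < Fintype.card W := Fintype.card_pos_iff.2 ⟨c⟩
  omega

end AuxBest
noncomputable section AuxRun
variable {M W : Type} [Fintype M] [Fintype W]

lemma hold_step_cases (P : Pref M W) (s : DAState M W) (b : W) (m : M)
    (h : (daStep P s).hold b = some m) :
    (IsFree s m ∧ target P m (s.next m) = some b) ∨ s.hold b = some m := by
  have hmem := best_mem h
  rw [Finset.mem_union] at hmem
  rcases hmem with hmem | hmem
  · rw [Finset.mem_filter] at hmem
    exact Or.inl hmem.2
  · rw [Option.mem_toFinset, Option.mem_def] at hmem
    exact Or.inr hmem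

lemma next_le_step (P : Pref M W) (s : DAState M W) (a : M) :
    s.next a ≤ (daStep P s).next a := by
  simp only [daStep]
  split_ifs <;> omega

lemma finished_daRun (P : Pref M W) : ∀ (n : ℕ) (s : DAState M W),
    (∀ a, s.next a ≤ Fintype.card W) →
    Fintype.card M * Fintype.card W < n + ∑ a, s.next a →
    Finished P (daRun P n s)
  | 0, s, hb, hlt => by
    exfalso
    have : ∑ a, s.next a ≤ Fintype.card M * Fintype.card W := by
      calc ∑ a, s.next a ≤ ∑ _a : M, Fintype.card W := Finset.sum_le_sum fun a _ => hb a
        _ = Fintype.card M * Fintype.card W := by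
            rw [Finset.sum_const, Finset.card_univ, smul_eq_mul]
    omega
  | n + 1, s, hb, hlt => by
    rw [daRun]
    split_ifs with hf
    · exact hf
    · apply finished_daRun P n (daStep P s)
      · intro a
        simp only [daStep]
        split_ifs with h
        · obtain ⟨c, hc⟩ := Option.isSome_iff_exists.mp h.2
          have := target_lt (P := P) (a := a) (k := s.next a) hc
          omega
        · exact hb a
      · rw [Finished] at hf
        push_neg at hf
        obtain ⟨a0, hfree, hne⟩ := hf
        have h0 : s.next a0 < (daStep P s).next a0 := by
          simp only [daStep]
          rw [if_pos ⟨hfree, Option.ne_none_iff_isSome.mp hne⟩]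
          omega
        have hsum : ∑ a, s.next a < ∑ a, (daStep P s).next a :=
          Finset.sum_lt_sum (fun a _ => next_le_step P s a) ⟨a0, Finset.mem_univ _, h0⟩
        omega

lemma finished_final (P : Pref M W) : Finished P (daFinal P) := by
  apply finished_daRun
  · intro a
    exact Nat.zero_le _
  · have : ∑ _a : M, (0:ℕ) = 0 := Finset.sum_const_zero
    show Fintype.card M * Fintype.card W <
      Fintype.card M * (Fintype.card W + 1) + 1 + ∑ _a : M, (0:ℕ)
    rw [this, Nat.mul_succ]
    omega

lemma hold_step_persist (Q : Pref M W) {a : M} {b : W}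
    (htop : ∀ x, x ≠ some a → Q.wrank b (some a) < Q.wrank b x)
    {s : DAState M W} (hs : s.hold b = some a) : (daStep Q s).hold b = some a := by
  apply best_top Q b _ htop
  rw [Finset.mem_union, Option.mem_toFinset, Option.mem_def]
  exact Or.inr hs

lemma hold_run_persist (Q : Pref M W) {a : M} {b : W}
    (htop : ∀ x, x ≠ some a → Q.wrank b (some a) < Q.wrank b x) :
    ∀ (n : ℕ) (s : DAState M W), s.hold b = some a → (daRun Q n s).hold b = some a
  | 0, _, h => h
  | n + 1, s, h => by
    rw [daRun]
    split_ifs with hf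
    · exact h
    · exact hold_run_persist Q htop n _ (hold_step_persist Q htop h)

lemma propose_capture (Q : Pref M W) {a : M} {b : W}
    (htop : ∀ x, x ≠ some a → Q.wrank b (some a) < Q.wrank b x)
    {s : DAState M W} (hfree : IsFree s a) (ht : target Q a (s.next a) = some b) :
    (daStep Q s).hold b = some a := by
  apply best_top Q b _ htop
  rw [Finset.mem_union]
  exact Or.inl (Finset.mem_filter.2 ⟨Finset.mem_univ _, hfree, ht⟩)

end AuxRun
noncomputable section AuxCouple
variable {M W : Type} [Fintype M] [Fintype W]

/-- Transfer of `best` between two preference profiles that agree on woman `b`'s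
ranking except that `Q` promotes `a` to the top, over sets not containing `a`. -/
lemma best_transfer {P Q : Pref M W} {a : M} {b : W}
    (hii : ∀ x y : Option M, x ≠ some a → y ≠ some a →
      (Q.wrank b x < Q.wrank b y ↔ P.wrank b x < P.wrank b y))
    (c : Finset M) (hac : a ∉ c) : best Q b c = best P b c := by
  have hwt : ∀ m : M, m ≠ a → (wAcc Q b m ↔ wAcc P b m) := by
    intro m hma
    exact hii (some m) none (by simp [hma]) (by simp)
  rcases h : best P b c with _ | m
  · rw [best_eq_none_iff] at h ⊢
    intro m hm
    rw [hwt m (fun e => hac (e ▸ hm))]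
    exact h m hm
  · rw [best_eq_some_iff] at h ⊢
    obtain ⟨hm, hacc, hmin⟩ := h
    have hma : m ≠ a := fun e => hac (e ▸ hm)
    refine ⟨hm, (hwt m hma).2 hacc, ?_⟩
    intro m' hm' hacc'
    have hma' : m' ≠ a := fun e => hac (e ▸ hm')
    by_contra hlt
    push_neg at hlt
    have h1 := (hii (some m') (some m) (by simp [hma']) (by simp [hma])).1 hlt
    have h2 := hmin m' hm' ((hwt m' hma').1 hacc')
    omega

lemma run_couple {P Q : Pref M W} {a : M} {b : W}
    (hm : P.mrank = Q.mrank)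
    (hw : ∀ c : W, c ≠ b → P.wrank c = Q.wrank c)
    (hi : ∀ x : Option M, x ≠ some a → Q.wrank b (some a) < Q.wrank b x)
    (hii : ∀ x y : Option M, x ≠ some a → y ≠ some a →
      (Q.wrank b x < Q.wrank b y ↔ P.wrank b x < P.wrank b y)) :
    ∀ (n : ℕ) (s : DAState M W), s.hold b ≠ some a →
      daRun Q n s = daRun P n s ∨ (daRun Q n s).hold b = some a
  | 0, s, _ => Or.inl rfl
  | n + 1, s, h => by
    have htgt : target Q = target P := (target_congr hm).symm
    have hfin : Finished Q s ↔ Finished P s := by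
      unfold Finished
      rw [htgt]
    rw [daRun, daRun]
    by_cases hf : Finished P s
    · rw [if_pos hf, if_pos (hfin.2 hf)]
      exact Or.inl rfl
    · rw [if_neg hf, if_neg (fun h' => hf (hfin.1 h'))]
      by_cases hprop : IsFree s a ∧ target P a (s.next a) = some b
      · right
        apply hold_run_persist Q hi n
        apply propose_capture Q hi hprop.1
        rw [htgt]
        exact hprop.2
      · have hstep : daStep Q s = daStep P s := by
          unfold daStep
          congr 1
          · funext m
            rw [htgt]
          · funext c
            rw [htgt]
            by_cases hc : c = b
            · subst hc
              apply best_transfer hii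
              intro hmem
              rw [Finset.mem_union] at hmem
              rcases hmem with hmem | hmem
              · rw [Finset.mem_filter] at hmem
                exact hprop hmem.2
              · rw [Option.mem_toFinset, Option.mem_def] at hmem
                exact h hmem
            · exact (best_congr c (hw c hc) _).symm
        rw [hstep]
        have hnew : (daStep P s).hold b ≠ some a := by
          intro hh
          rcases hold_step_cases P s b a hh with ⟨hfree, ht⟩ | hh'
          · exact hprop ⟨hfree, ht⟩
          · exact h hh'
        exact run_couple hm hw hi hii n (daStep P s) hnew

lemma final_couple {P Q : Pref M W} {a : M} {b : W}
    (hm : P.mrank = Q.mrank)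
    (hw : ∀ c : W, c ≠ b → P.wrank c = Q.wrank c)
    (hi : ∀ x : Option M, x ≠ some a → Q.wrank b (some a) < Q.wrank b x)
    (hii : ∀ x y : Option M, x ≠ some a → y ≠ some a →
      (Q.wrank b x < Q.wrank b y ↔ P.wrank b x < P.wrank b y)) :
    daFinal Q = daFinal P ∨ (daFinal Q).hold b = some a := by
  apply run_couple hm hw hi hii
  simp [daInit]

end AuxCouple
noncomputable section AuxCapture
variable {M W : Type} [Fintype M] [Fintype W]

/-- Anyone held by a woman has targeted her at some point on his list. -/
lemma hold_targeted (Q : Pref M W) : ∀ (n : ℕ) (s : DAState M W),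
    (∀ (c : W) (m : M), s.hold c = some m → ∃ k, target Q m k = some c) →
    ∀ (c : W) (m : M), (daRun Q n s).hold c = some m → ∃ k, target Q m k = some c
  | 0, s, hs => hs
  | n + 1, s, hs => by
    rw [daRun]
    split_ifs with hf
    · exact hs
    · apply hold_targeted Q n (daStep Q s)
      intro c m hc
      rcases hold_step_cases Q s c m hc with ⟨_, ht⟩ | hh
      · exact ⟨s.next m, ht⟩
      · exact hs c m hh

lemma capture_final (Q : Pref M W) {a : M} {b : W}
    (hM1 : ∀ c : W, mAcc Q a c ↔ c = b)
    (htop : ∀ x : Option M, x ≠ some a → Q.wrank b (some a) < Q.wrank b x) :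
    (daFinal Q).hold b = some a ∧ ∀ c : W, (daFinal Q).hold c = some a → c = b := by
  have ht0 : target Q a 0 = some b := by
    rw [target_eq_some_iff]
    refine ⟨(hM1 b).2 rfl, ?_⟩
    rw [Finset.card_eq_zero, Finset.eq_empty_iff_forall_notMem]
    intro c hc
    rw [Finset.mem_filter] at hc
    obtain ⟨-, hacc, hlt⟩ := hc
    rw [(hM1 c).1 hacc] at hlt
    exact lt_irrefl _ hlt
  have Jrun : ∀ (n : ℕ) (s : DAState M W),
      (s.hold b = some a ∨ (IsFree s a ∧ s.next a = 0)) →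
      ((daRun Q n s).hold b = some a ∨
        (IsFree (daRun Q n s) a ∧ (daRun Q n s).next a = 0)) := by
    intro n
    induction n with
    | zero => exact fun s hs => hs
    | succ n ih =>
      intro s hs
      rw [daRun]
      split_ifs with hf
      · exact hs
      · apply ih
        rcases hs with hs | ⟨hfree, hn⟩
        · exact Or.inl (hold_step_persist Q htop hs)
        · left
          apply propose_capture Q htop hfree
          rw [hn]
          exact ht0
  have hJ : (daFinal Q).hold b = some a ∨
      (IsFree (daFinal Q) a ∧ (daFinal Q).next a = 0) :=
    Jrun (Fintype.card M * (Fintype.card W + 1) + 1) daInit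
      (Or.inr ⟨fun c => by simp [daInit], rfl⟩)
  have hfin := finished_final Q
  have hbold : (daFinal Q).hold b = some a := by
    rcases hJ with h | ⟨hfree, hn⟩
    · exact h
    · exfalso
      have := hfin a hfree
      rw [hn, ht0] at this
      simp at this
  refine ⟨hbold, fun c hc => ?_⟩
  obtain ⟨k, hk⟩ := hold_targeted Q _ daInit
    (fun c m hcm => by simp [daInit] at hcm) c a hc
  exact (hM1 c).1 (target_eq_some hk).1

end AuxCapture
noncomputable section AuxPromote

/-- The map on `Fin n` sending `k` to `0`, shifting everything below `k` up by one. -/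
def shiftFun {n : ℕ} (k j : Fin n) : Fin n :=
  ⟨if j = k then 0 else if j.val < k.val then j.val + 1 else j.val, by
    have hj := j.isLt
    have hk := k.isLt
    split_ifs <;> omega⟩

lemma shiftFun_inj {n : ℕ} (k : Fin n) : Function.Injective (shiftFun k) := by
  intro x y h
  have hv : (shiftFun k x).val = (shiftFun k y).val := congrArg Fin.val h
  simp only [shiftFun, Fin.ext_iff] at hv ⊢
  have hx := x.isLt
  have hy := y.isLt
  have hk := k.isLt
  split_ifs at hv <;> omega

def shiftTo0 {n : ℕ} (k : Fin n) : Fin n ≃ Fin n :=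
  Equiv.ofBijective _ ((Finite.injective_iff_bijective).mp (shiftFun_inj k))

lemma shiftTo0_val {n : ℕ} (k j : Fin n) :
    (shiftTo0 k j : ℕ) = if j = k then 0 else if j.val < k.val then j.val + 1 else j.val :=
  rfl

/-- Modify a ranking by promoting `a` to the very top, keeping all other
relative comparisons unchanged. -/
def promote {α : Type} {n : ℕ} (e : α ≃ Fin n) (a : α) : α ≃ Fin n :=
  e.trans (shiftTo0 (e a))

lemma promote_self {α : Type} {n : ℕ} (e : α ≃ Fin n) (a : α) :
    (promote e a a : ℕ) = 0 := by
  simp [promote, shiftTo0_val]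

lemma promote_lt {α : Type} {n : ℕ} (e : α ≃ Fin n) (a : α) {x : α} (hx : x ≠ a) :
    (promote e a a : ℕ) < (promote e a x : ℕ) := by
  have hne : e x ≠ e a := fun h => hx (e.injective h)
  have hnev : (e x).val ≠ (e a).val := fun h => hne (Fin.ext h)
  rw [promote_self]
  simp only [promote, Equiv.trans_apply, shiftTo0_val, if_neg hne]
  split_ifs <;> omega

lemma promote_val {α : Type} {n : ℕ} (e : α ≃ Fin n) (a x : α) (hx : x ≠ a) :
    (promote e a x : ℕ) = if (e x : ℕ) < (e a : ℕ) then (e x : ℕ) + 1 else (e x : ℕ) := by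
  have hne : e x ≠ e a := fun h => hx (e.injective h)
  simp only [promote, Equiv.trans_apply, shiftTo0_val, if_neg hne]

lemma promote_iff {α : Type} {n : ℕ} (e : α ≃ Fin n) (a : α) {x y : α}
    (hx : x ≠ a) (hy : y ≠ a) :
    ((promote e a x : ℕ) < (promote e a y : ℕ) ↔ (e x : ℕ) < (e y : ℕ)) := by
  have hnex : e x ≠ e a := fun h => hx (e.injective h)
  have hnexv : (e x).val ≠ (e a).val := fun h => hnex (Fin.ext h)
  have hney : e y ≠ e a := fun h => hy (e.injective h)
  have hneyv : (e y).val ≠ (e a).val := fun h => hney (Fin.ext h)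
  simp only [promote, Equiv.trans_apply, shiftTo0_val, if_neg hnex, if_neg hney]
  split_ifs <;> omega

end AuxPromote
noncomputable section AuxGame
variable {M W : Type} [Fintype M] [Fintype W] [DecidableEq M] [DecidableEq W]

lemma expPay_delta (π : ∀ _ : M ⊕ W, (∀ j : M ⊕ W, Strat M W j) → ℝ) (i : M ⊕ W)
    (r : ∀ j : M ⊕ W, Strat M W j) :
    expPay π i (fun j => delta (r j)) = π i r := by
  unfold expPay
  rw [Finset.sum_eq_single r]
  · simp [delta]
  · intro s _ hs
    have hex : ∃ j, s j ≠ r j := by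
      by_contra hc
      push_neg at hc
      exact hs (funext hc)
    obtain ⟨j, hj⟩ := hex
    have hz : (∏ j, delta (r j) (s j)) = 0 :=
      Finset.prod_eq_zero (Finset.mem_univ j) (by simp [delta, hj])
    rw [hz, zero_mul]
  · intro h
    exact absurd (Finset.mem_univ r) h

lemma update_delta (r : ∀ j : M ⊕ W, Strat M W j) (i : M ⊕ W) (h : Strat M W i) :
    Function.update (fun j => delta (r j)) i (delta h) =
      fun j => delta (Function.update r i h j) := by
  funext j
  rcases eq_or_ne j i with rfl | hj
  · rw [Function.update_self, Function.update_self]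
  · rw [Function.update_of_ne hj, Function.update_of_ne hj]

lemma pure_better_mem (π : ∀ _ : M ⊕ W, (∀ j : M ⊕ W, Strat M W j) → ℝ)
    (H : ∀ i : M ⊕ W, Set (Strat M W i)) (hcl : CUWBR π H)
    (r : ∀ j : M ⊕ W, Strat M W j) (hr : ∀ i, r i ∈ H i) (i : M ⊕ W) (h : Strat M W i)
    (hge : π i r ≤ π i (Function.update r i h)) : h ∈ H i := by
  apply hcl i h
  refine ⟨fun j => delta (r j), ?_, ?_, ?_⟩
  · intro j
    constructor
    · intro t
      show (0:ℝ) ≤ if t = r j then 1 else 0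
      split_ifs <;> norm_num
    · show (∑ t, if t = r j then (1:ℝ) else 0) = 1
      simp
  · intro j t ht
    by_cases he : t = r j
    · rw [he]
      exact hr j
    · exfalso
      apply ht
      show (if t = r j then (1:ℝ) else 0) = 0
      rw [if_neg he]
  · rw [expPay_delta, update_delta, expPay_delta]
    exact hge

end AuxGame
/-- If a matching `μ` has a partial preimage `H` that is closed
under weakly better replies in the preference revelation game induced by the
man-proposing deferred acceptance mechanism (with payoffs strictly decreasing in
true-preference rank), then `μ` has no blocking pair w.r.t. the true preferences. -/
theorem cuwbr_no_blocking {M W : Type} [Fintype M] [Fintype W]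
    [DecidableEq M] [DecidableEq W] (P : Pref M W)
    (um : M → ℕ → ℝ) (uw : W → ℕ → ℝ)
    (hum : ∀ a x y, x < y → um a y < um a x)
    (huw : ∀ b x y, x < y → uw b y < uw b x)
    (μ : Matching M W) (H : ∀ i : M ⊕ W, Set (Strat M W i))
    (hpp : ∀ r : ∀ i : M ⊕ W, Strat M W i, (∀ i, r i ∈ H i) →
      daMu (reportPref r) = μ.mu ∧ daNu (reportPref r) = μ.nu)
    (hne : ∃ r : ∀ i : M ⊕ W, Strat M W i, ∀ i, r i ∈ H i)
    (hcl : CUWBR (daPayoff P um uw) H) :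
    ∀ a b, ¬ Blocks P μ a b := by
  rintro a b ⟨hba, hab⟩
  obtain ⟨r, hr⟩ := hne
  -- Step 1: woman b promotes a to the top of her reported list.
  set hb : Strat M W (Sum.inr b) := promote (r (Sum.inr b)) (some a) with hbdef
  set r' := Function.update r (Sum.inr b) hb with r'def
  have hr'b : r' (Sum.inr b) = hb := Function.update_self _ _ _
  have hmm : (reportPref r).mrank = (reportPref r').mrank := by
    funext a' o
    show ((r (Sum.inl a')) o : ℕ) = ((r' (Sum.inl a')) o : ℕ)
    rw [r'def, Function.update_of_ne (by simp)]
  have hww : ∀ c : W, c ≠ b → (reportPref r).wrank c = (reportPref r').wrank c := by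
    intro c hc
    funext o
    show ((r (Sum.inr c)) o : ℕ) = ((r' (Sum.inr c)) o : ℕ)
    rw [r'def, Function.update_of_ne (by simp [hc])]
  have hwb' : ∀ o : Option M, (reportPref r').wrank b o = ((hb o : ℕ)) := by
    intro o
    show ((r' (Sum.inr b)) o : ℕ) = _
    rw [hr'b]
  have hi : ∀ x : Option M, x ≠ some a →
      (reportPref r').wrank b (some a) < (reportPref r').wrank b x := by
    intro x hx
    rw [hwb', hwb']
    exact promote_lt _ _ hx
  have hii : ∀ x y : Option M, x ≠ some a → y ≠ some a →
      ((reportPref r').wrank b x < (reportPref r').wrank b y ↔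
        (reportPref r).wrank b x < (reportPref r).wrank b y) := by
    intro x y hx hy
    rw [hwb', hwb']
    exact promote_iff _ _ hx hy
  have hnur : daNu (reportPref r) = μ.nu := (hpp r hr).2
  have hbH : hb ∈ H (Sum.inr b) := by
    apply pure_better_mem _ H hcl r hr (Sum.inr b)
    show uw b (P.wrank b (daNu (reportPref r) b)) ≤
      uw b (P.wrank b (daNu (reportPref (Function.update r (Sum.inr b) hb)) b))
    rw [← r'def]
    rcases final_couple hmm hww hi hii with hcase | hcase
    · show _ ≤ uw b (P.wrank b ((daFinal (reportPref r')).hold b))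
      rw [hcase]
      exact le_refl _
    · show _ ≤ uw b (P.wrank b ((daFinal (reportPref r')).hold b))
      rw [hcase, hnur]
      exact (huw b _ _ hab).le
  have hr' : ∀ i, r' i ∈ H i := by
    intro i
    rcases eq_or_ne i (Sum.inr b) with rfl | hi2
    · rw [hr'b]
      exact hbH
    · rw [r'def, Function.update_of_ne hi2]
      exact hr i
  have hmu' : daMu (reportPref r') = μ.mu := (hpp r' hr').1
  -- Step 2: man a reports only b acceptable (b first, staying single second).
  set e1 : Option W ≃ Fin (Fintype.card W + 1) :=
    promote (Fintype.equivFinOfCardEq (Fintype.card_option)) none with e1def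
  set ha : Strat M W (Sum.inl a) := promote e1 (some b) with hadef
  set r'' := Function.update r' (Sum.inl a) ha with r''def
  have hr''a : r'' (Sum.inl a) = ha := Function.update_self _ _ _
  have hma'' : ∀ o : Option W, (reportPref r'').mrank a o = ((ha o : ℕ)) := by
    intro o
    show ((r'' (Sum.inl a)) o : ℕ) = _
    rw [hr''a]
  have hb0 : (ha (some b) : ℕ) = 0 := promote_self e1 (some b)
  have hn1 : (ha none : ℕ) = 1 := by
    have h10 : (e1 none : ℕ) = 0 := promote_self _ none
    have hlt : (e1 none : ℕ) < (e1 (some b) : ℕ) := promote_lt _ none (by simp)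
    rw [hadef, promote_val e1 (some b) none (by simp), if_pos (by omega), h10]
  have hM1 : ∀ c : W, mAcc (reportPref r'') a c ↔ c = b := by
    intro c
    unfold mAcc
    rw [hma'', hma'', hn1]
    constructor
    · intro hlt
      have h0 : (ha (some c) : ℕ) = 0 := by omega
      have hval : (ha (some c)).val = (ha (some b)).val := by rw [h0, hb0]
      exact Option.some_inj.mp (ha.injective (Fin.ext hval))
    · rintro rfl
      rw [hb0]
      omega
  have hww'' : (reportPref r'').wrank b = (reportPref r').wrank b := by
    funext o
    show ((r'' (Sum.inr b)) o : ℕ) = ((r' (Sum.inr b)) o : ℕ)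
    rw [r''def, Function.update_of_ne (by simp)]
  have htop'' : ∀ x : Option M, x ≠ some a →
      (reportPref r'').wrank b (some a) < (reportPref r'').wrank b x := by
    intro x hx
    rw [hww'']
    exact hi x hx
  obtain ⟨hbold, huniq⟩ := capture_final (reportPref r'') hM1 htop''
  have hmua : daMu (reportPref r'') a = some b := by
    unfold daMu
    have hex : ∃ c, (daFinal (reportPref r'')).hold c = some a := ⟨b, hbold⟩
    rw [dif_pos hex]
    exact congrArg some (huniq _ hex.choose_spec)
  have hhaH : ha ∈ H (Sum.inl a) := by
    apply pure_better_mem _ H hcl r' hr' (Sum.inl a)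
    show um a (P.mrank a (daMu (reportPref r') a)) ≤
      um a (P.mrank a (daMu (reportPref (Function.update r' (Sum.inl a) ha)) a))
    rw [← r''def, hmu', hmua]
    exact (hum a _ _ hba).le
  have hr'' : ∀ i, r'' i ∈ H i := by
    intro i
    rcases eq_or_ne i (Sum.inl a) with rfl | hi2
    · rw [hr''a]
      exact hhaH
    · rw [r''def, Function.update_of_ne hi2]
      exact hr' i
  have hmufin : μ.mu a = some b := by
    rw [← (hpp r'' hr'').1, hmua]
  rw [hmufin] at hba
  exact lt_irrefl _ hba
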